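/- Let c_m := m! times the coefficient of x^m in the formal power series expansion over ℚ of 2·(1 + exp(−x))⁻¹ (so c_0 = 1, c_1 = 1/2, c_2 = 0, c_3 = −1/4, …). Then for every integer n ≥ 0, the identity α^{2n+1} + (1−α)^{2n+1} = Σ_{i=0}^{n} c_{2i+1} · C(2n+1, 2i+1) · ( α^{2n−2i} + (1−α)^{2n−2i} ) holds as an identity of polynomials in α over ℚ, where C(·,·) denotes the binomial coefficient. -/

import Mathlib

noncomputable section

open PowerSeries

/-- `c m` is `m!` times the coefficient of `x^m` in the power series expansion of
`2/(1 + exp(-x))` over `ℚ`. -/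
def c (m : ℕ) : ℚ :=
  (m.factorial : ℚ) *
    PowerSeries.coeff m (2 * (1 + PowerSeries.rescale (-1) (PowerSeries.exp ℚ))⁻¹)

namespace OddPowAux

abbrev A : Type := Polynomial ℚ

def P : ℚ⟦X⟧ := 1 + rescale (-1) (exp ℚ)
def G : ℚ⟦X⟧ := 2 * (1 + rescale (-1) (exp ℚ))⁻¹

lemma constCoeff_P : constantCoeff P = 2 := by
  have : constantCoeff (rescale (-1) (exp ℚ)) = 1 := by
    rw [← coeff_zero_eq_constantCoeff_apply, coeff_rescale]
    simp
  simp [P, this]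
  norm_num

lemma P_ne : P ≠ 0 := fun h => by
  have := constCoeff_P
  rw [h] at this
  simp at this

lemma PG : P * G = 2 := by
  have h := PowerSeries.mul_inv_cancel P (by rw [constCoeff_P]; norm_num)
  have hG : G = 2 * P⁻¹ := rfl
  rw [hG]
  calc P * (2 * P⁻¹) = 2 * (P * P⁻¹) := by ring
    _ = 2 := by rw [h]; ring

lemma em : rescale (-1) (exp ℚ) * G = 2 - G := by
  apply mul_left_cancel₀ P_ne
  have h1 : P * (rescale (-1) (exp ℚ) * G) = rescale (-1) (exp ℚ) * (P * G) := by ring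
  rw [h1, PG]
  have h2 : P * (2 - G) = 2 * P - P * G := by ring
  rw [h2, PG]
  rw [show P = 1 + rescale (-1) (exp ℚ) from rfl]
  ring

lemma exp_mul_exp_neg : exp ℚ * rescale (-1) (exp ℚ) = 1 := by
  have h := exp_mul_exp_eq_exp_add (1 : ℚ) (-1)
  rw [show (1 : ℚ) + (-1) = 0 from by norm_num] at h
  rw [rescale_one] at h
  simpa [rescale_zero] using h

lemma expG : exp ℚ * G = 2 * exp ℚ - G := by
  have h2 : G = 2 * exp ℚ - exp ℚ * G := by
    calc G = (exp ℚ * rescale (-1) (exp ℚ)) * G := by rw [exp_mul_exp_neg, one_mul]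
      _ = exp ℚ * (rescale (-1) (exp ℚ) * G) := by ring
      _ = exp ℚ * (2 - G) := by rw [em]
      _ = 2 * exp ℚ - exp ℚ * G := by ring
  linear_combination h2

lemma rescale_neg_P : rescale (-1 : ℚ) P = 1 + exp ℚ := by
  rw [show P = 1 + rescale (-1) (exp ℚ) from rfl, map_add, map_one, rescale_rescale]
  norm_num [rescale_one]

lemma rescale_neg_P_ne : rescale (-1 : ℚ) P ≠ 0 := by
  rw [rescale_neg_P]
  intro h
  have h2 : (2 : ℚ) = 0 := by
    have := congrArg (constantCoeff) h
    simp at this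
  norm_num at h2

lemma rescale_neg_G : rescale (-1 : ℚ) G = 2 - G := by
  apply mul_left_cancel₀ rescale_neg_P_ne
  have h1 : rescale (-1 : ℚ) P * rescale (-1 : ℚ) G = rescale (-1 : ℚ) (P * G) :=
    (map_mul _ _ _).symm
  rw [h1, PG, map_ofNat, rescale_neg_P]
  linear_combination expG

lemma constCoeff_G : constantCoeff G = 1 := by
  have := congrArg (constantCoeff) PG
  rw [map_mul, constCoeff_P, map_ofNat] at this
  linarith

lemma coeff_G_even (m : ℕ) (hm : Even m) (h0 : m ≠ 0) : coeff m G = 0 := by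
  have h := congrArg (coeff m) rescale_neg_G
  rw [coeff_rescale, hm.neg_one_pow, one_mul, map_sub] at h
  have h2 : coeff m (2 : ℚ⟦X⟧) = 0 := by
    rw [show (2 : ℚ⟦X⟧) = C 2 from by rw [map_ofNat], coeff_C]
    simp [h0]
  rw [h2] at h
  linarith

/-! ### Passing to `Polynomial ℚ` -/

def Gh : A⟦X⟧ := PowerSeries.map (algebraMap ℚ A) G

def F : A⟦X⟧ := rescale (Polynomial.X) (exp A) + rescale (1 - Polynomial.X) (exp A)

lemma map_rescale (a : ℚ) (f : ℚ⟦X⟧) :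
    PowerSeries.map (algebraMap ℚ A) (rescale a f)
      = rescale (algebraMap ℚ A a) (PowerSeries.map (algebraMap ℚ A) f) := by
  ext n
  simp [coeff_rescale, map_mul, map_pow]

lemma algebraMap_neg_one : algebraMap ℚ A (-1) = -1 := by
  rw [map_neg, map_one]

lemma e_Gh : rescale (-1 : A) (exp A) * Gh = 2 - Gh := by
  have h := congrArg (PowerSeries.map (algebraMap ℚ A)) em
  rw [map_mul, map_rescale, PowerSeries.map_exp, map_sub, map_ofNat, algebraMap_neg_one] at h
  exact h

lemma rescale_Gh : rescale (-1 : A) Gh = 2 - Gh := by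
  have h := congrArg (PowerSeries.map (algebraMap ℚ A)) rescale_neg_G
  rw [map_rescale, map_sub, map_ofNat, algebraMap_neg_one] at h
  exact h

lemma rescale_F : rescale (-1 : A) F = F * rescale (-1 : A) (exp A) := by
  rw [show F = rescale (Polynomial.X) (exp A) + rescale (1 - Polynomial.X) (exp A) from rfl,
    map_add, rescale_rescale, rescale_rescale, add_mul,
    exp_mul_exp_eq_exp_add, exp_mul_exp_eq_exp_add]
  have e1 : (Polynomial.X : A) * (-1) = (1 - Polynomial.X) + (-1) := by ring
  have e2 : ((1 : A) - Polynomial.X) * (-1) = Polynomial.X + (-1) := by ring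
  rw [e1, e2, add_comm]

lemma key_coeff (N : ℕ) (hN : Odd N) : coeff N (F * Gh) = 2 * coeff N F := by
  have hH : rescale (-1 : A) (2 * F - F * Gh) = 2 * F - F * Gh := by
    rw [map_sub, map_mul, map_mul, map_ofNat, rescale_F, rescale_Gh]
    linear_combination F * e_Gh
  have h := congrArg (coeff N) hH
  rw [coeff_rescale, hN.neg_one_pow] at h
  have h2 : coeff N (2 * F - F * Gh) * 2 = 0 := by linear_combination -h
  have h3 : coeff N (2 * F - F * Gh) = 0 := by
    rcases mul_eq_zero.mp h2 with h' | h'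
    · exact h'
    · exfalso; norm_num at h'
  have h4 : coeff N (2 * F) = 2 * coeff N F := by
    rw [show (2 : A⟦X⟧) = C 2 from by rw [map_ofNat], coeff_C_mul]
  rw [map_sub, h4] at h3
  linear_combination -h3

lemma coeff_F (k : ℕ) :
    coeff k F = (Polynomial.X ^ k + (1 - Polynomial.X) ^ k)
      * Polynomial.C ((k.factorial : ℚ)⁻¹) := by
  rw [show F = rescale (Polynomial.X) (exp A) + rescale (1 - Polynomial.X) (exp A) from rfl,
    map_add, coeff_rescale, coeff_rescale, coeff_exp, Polynomial.algebraMap_eq, one_div]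
  ring

lemma coeff_Gh (m : ℕ) : coeff m Gh = Polynomial.C (coeff m G) := by
  rw [show Gh = PowerSeries.map (algebraMap ℚ A) G from rfl, PowerSeries.coeff_map,
    Polynomial.algebraMap_eq]

lemma coeff_mul_expand (N : ℕ) :
    coeff N (F * Gh)
      = ∑ m ∈ Finset.range (N + 1), Polynomial.C (coeff m G) * coeff (N - m) F := by
  rw [mul_comm, coeff_mul, Finset.Nat.sum_antidiagonal_eq_sum_range_succ_mk]
  exact Finset.sum_congr rfl fun m _ => by rw [coeff_Gh]

lemma sum_range_split {M : Type*} [AddCommMonoid M] (f : ℕ → M) :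
    ∀ n : ℕ, ∑ m ∈ Finset.range (2 * n + 2), f m
      = ∑ i ∈ Finset.range (n + 1), f (2 * i) + ∑ i ∈ Finset.range (n + 1), f (2 * i + 1)
  | 0 => by simp [Finset.sum_range_succ]
  | (k + 1) => by
    rw [show 2 * (k + 1) + 2 = (2 * k + 2) + 1 + 1 from by ring, Finset.sum_range_succ,
      Finset.sum_range_succ, sum_range_split f k,
      Finset.sum_range_succ (fun i => f (2 * i)) (k + 1),
      Finset.sum_range_succ (fun i => f (2 * i + 1)) (k + 1),
      show 2 * (k + 1) = 2 * k + 2 from by ring]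
    have h3 : 2 * k + 2 + 1 = 2 * k + 3 := rfl
    rw [h3]
    abel

end OddPowAux

open OddPowAux in
/-- For every `n ≥ 0`, the polynomial identity
`α^{2n+1} + (1-α)^{2n+1} = Σ_{i=0}^{n} c_{2i+1}·C(2n+1,2i+1)·(α^{2n-2i} + (1-α)^{2n-2i})`
holds over `ℚ`. -/
theorem odd_power_sum_identity (n : ℕ) :
    (Polynomial.X : Polynomial ℚ) ^ (2 * n + 1) + (1 - Polynomial.X) ^ (2 * n + 1) =
      ∑ i ∈ Finset.range (n + 1),
        Polynomial.C (c (2 * i + 1)) * ((2 * n + 1).choose (2 * i + 1) : Polynomial ℚ) *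
          ((Polynomial.X : Polynomial ℚ) ^ (2 * n - 2 * i) +
            (1 - Polynomial.X) ^ (2 * n - 2 * i)) := by
  have hN : Odd (2 * n + 1) := ⟨n, by ring⟩
  have key := key_coeff (2 * n + 1) hN
  rw [coeff_mul_expand,
    show 2 * n + 1 + 1 = 2 * n + 2 from rfl,
    sum_range_split (fun m => Polynomial.C (coeff m G) * coeff (2 * n + 1 - m) F) n] at key
  have heven : ∑ i ∈ Finset.range (n + 1),
      Polynomial.C (coeff (2 * i) G) * coeff (2 * n + 1 - 2 * i) F
        = coeff (2 * n + 1) F := by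
    rw [Finset.sum_eq_single 0]
    · simp [coeff_zero_eq_constantCoeff, constCoeff_G]
    · intro i _ hi
      rw [coeff_G_even (2 * i) (even_two_mul i) (by omega)]
      simp
    · intro h
      exact absurd (Finset.mem_range.mpr (by omega)) h
  rw [heven] at key
  have key2 : ∑ i ∈ Finset.range (n + 1),
      Polynomial.C (coeff (2 * i + 1) G) * coeff (2 * n + 1 - (2 * i + 1)) F
        = coeff (2 * n + 1) F := by linear_combination key
  have key3 : ∑ i ∈ Finset.range (n + 1),
      Polynomial.C (coeff (2 * i + 1) G) *
        ((Polynomial.X ^ (2 * n - 2 * i) + (1 - Polynomial.X) ^ (2 * n - 2 * i))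
          * Polynomial.C (((2 * n - 2 * i).factorial : ℚ)⁻¹))
      = (Polynomial.X ^ (2 * n + 1) + (1 - Polynomial.X) ^ (2 * n + 1))
          * Polynomial.C ((((2 * n + 1).factorial : ℕ) : ℚ)⁻¹) := by
    rw [← coeff_F, ← key2]
    refine Finset.sum_congr rfl fun i hi => ?_
    rw [show 2 * n + 1 - (2 * i + 1) = 2 * n - 2 * i from by omega, coeff_F]
  have hfacne : ∀ k : ℕ, ((k.factorial : ℚ)) ≠ 0 := fun k => by
    exact_mod_cast k.factorial_ne_zero
  calc (Polynomial.X : Polynomial ℚ) ^ (2 * n + 1) + (1 - Polynomial.X) ^ (2 * n + 1)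
      = (Polynomial.X ^ (2 * n + 1) + (1 - Polynomial.X) ^ (2 * n + 1))
          * Polynomial.C ((((2 * n + 1).factorial : ℕ) : ℚ)⁻¹)
          * Polynomial.C (((2 * n + 1).factorial : ℚ)) := by
        rw [mul_assoc, ← Polynomial.C_mul, inv_mul_cancel₀ (hfacne _), Polynomial.C_1, mul_one]
    _ = (∑ i ∈ Finset.range (n + 1),
          Polynomial.C (coeff (2 * i + 1) G) *
            ((Polynomial.X ^ (2 * n - 2 * i) + (1 - Polynomial.X) ^ (2 * n - 2 * i))
              * Polynomial.C (((2 * n - 2 * i).factorial : ℚ)⁻¹)))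
          * Polynomial.C (((2 * n + 1).factorial : ℚ)) := by rw [key3]
    _ = ∑ i ∈ Finset.range (n + 1),
          Polynomial.C (coeff (2 * i + 1) G) *
            ((Polynomial.X ^ (2 * n - 2 * i) + (1 - Polynomial.X) ^ (2 * n - 2 * i))
              * Polynomial.C (((2 * n - 2 * i).factorial : ℚ)⁻¹))
            * Polynomial.C (((2 * n + 1).factorial : ℚ)) := Finset.sum_mul _ _ _
    _ = _ := by
        refine Finset.sum_congr rfl fun i hi => ?_
        have hi' : i < n + 1 := Finset.mem_range.mp hi
        have hle : 2 * i + 1 ≤ 2 * n + 1 := by omega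
        have hfac : (((2 * n + 1).choose (2 * i + 1) : ℚ))
            * ((2 * i + 1).factorial : ℚ) * ((2 * n - 2 * i).factorial : ℚ)
            = ((2 * n + 1).factorial : ℚ) := by
          have h := Nat.choose_mul_factorial_mul_factorial hle
          rw [show 2 * n + 1 - (2 * i + 1) = 2 * n - 2 * i from by omega] at h
          exact_mod_cast congrArg (Nat.cast : ℕ → ℚ) h
        have hc : c (2 * i + 1)
            = ((2 * i + 1).factorial : ℚ) * coeff (2 * i + 1) G := rfl
        have hq : coeff (2 * i + 1) G * ((2 * n - 2 * i).factorial : ℚ)⁻¹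
              * ((2 * n + 1).factorial : ℚ)
            = c (2 * i + 1) * (((2 * n + 1).choose (2 * i + 1) : ℚ)) := by
          have h1 : (((2 * n - 2 * i).factorial : ℚ))⁻¹ * ((2 * n - 2 * i).factorial : ℚ) = 1 :=
            inv_mul_cancel₀ (hfacne _)
          calc coeff (2 * i + 1) G * ((2 * n - 2 * i).factorial : ℚ)⁻¹
                * ((2 * n + 1).factorial : ℚ)
              = coeff (2 * i + 1) G * ((2 * n - 2 * i).factorial : ℚ)⁻¹
                * ((((2 * n + 1).choose (2 * i + 1) : ℚ)) * ((2 * i + 1).factorial : ℚ)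
                    * ((2 * n - 2 * i).factorial : ℚ)) := by rw [hfac]
            _ = (((2 * i + 1).factorial : ℚ) * coeff (2 * i + 1) G)
                * (((2 * n + 1).choose (2 * i + 1) : ℚ))
                * ((((2 * n - 2 * i).factorial : ℚ))⁻¹ * ((2 * n - 2 * i).factorial : ℚ)) := by
                ring
            _ = c (2 * i + 1) * (((2 * n + 1).choose (2 * i + 1) : ℚ)) := by
                rw [h1, mul_one, ← hc]
        calc Polynomial.C (coeff (2 * i + 1) G) *
              ((Polynomial.X ^ (2 * n - 2 * i) + (1 - Polynomial.X) ^ (2 * n - 2 * i))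
                * Polynomial.C (((2 * n - 2 * i).factorial : ℚ)⁻¹))
              * Polynomial.C (((2 * n + 1).factorial : ℚ))
            = Polynomial.C (coeff (2 * i + 1) G * ((2 * n - 2 * i).factorial : ℚ)⁻¹
                * ((2 * n + 1).factorial : ℚ))
                * (Polynomial.X ^ (2 * n - 2 * i) + (1 - Polynomial.X) ^ (2 * n - 2 * i)) := by
              rw [Polynomial.C_mul, Polynomial.C_mul]; ring
          _ = Polynomial.C (c (2 * i + 1) * (((2 * n + 1).choose (2 * i + 1) : ℚ)))
                * (Polynomial.X ^ (2 * n - 2 * i) + (1 - Polynomial.X) ^ (2 * n - 2 * i)) := by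
              rw [hq]
          _ = _ := by
              rw [Polynomial.C_mul, Polynomial.C_eq_natCast]
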